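/- Let Δ ≥ 1 be an integer and let (ε_j)_{j∈ℕ} be the {0,1}-valued sequence with ε_j = 1 if and only if Δ divides j+1 (equivalently, Δ_j = Δ for all integers j ≥ −1, where Δ_j := min{k ≥ 1 : ε_{j+k} = 1}). Then the limit lim_{r→∞} (1/r) · Σ_{m=0}^{r−1} Σ_{ℓ=0}^{m} Π_{j=ℓ}^{m} (1+ε_j)^{−1} exists and equals (3Δ−1)/2. -/

import Mathlib

open Filter Finset

lemma adasmooth_aux_inner (Δ : ℕ) (hΔ : 1 ≤ Δ) (ε : ℕ → ℕ)
    (hε : ∀ j, ε j = if Δ ∣ (j + 1) then 1 else 0) (m : ℕ) :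
    ∑ l ∈ Finset.range (m + 1), ∏ j ∈ Finset.Icc l m, (1 + (ε j : ℝ))⁻¹
      = (((m + 1) % Δ : ℕ) : ℝ) + Δ - Δ * (2⁻¹ : ℝ) ^ ((m + 1) / Δ) := by
  induction m with
  | zero =>
    simp only [zero_add, Finset.range_one, Finset.sum_singleton, Finset.Icc_self,
      Finset.prod_singleton, hε 0]
    by_cases h : Δ = 1
    · subst h; norm_num
    · have h2 : 2 ≤ Δ := by omega
      have hd : ¬ Δ ∣ (0 + 1) := by
        simp only [Nat.zero_add, Nat.dvd_one]; omega
      rw [if_neg hd]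
      rw [Nat.mod_eq_of_lt (by omega), Nat.div_eq_of_lt (by omega)]
      norm_num
  | succ m ih =>
    have hsplit : ∑ l ∈ Finset.range (m + 2), ∏ j ∈ Finset.Icc l (m + 1), (1 + (ε j : ℝ))⁻¹
        = (1 + (ε (m + 1) : ℝ))⁻¹ *
            ((∑ l ∈ Finset.range (m + 1), ∏ j ∈ Finset.Icc l m, (1 + (ε j : ℝ))⁻¹) + 1) := by
      rw [Finset.sum_range_succ]
      have h1 : ∀ l ∈ Finset.range (m + 1),
          ∏ j ∈ Finset.Icc l (m + 1), (1 + (ε j : ℝ))⁻¹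
            = (∏ j ∈ Finset.Icc l m, (1 + (ε j : ℝ))⁻¹) * (1 + (ε (m + 1) : ℝ))⁻¹ := by
        intro l hl
        simp only [Finset.mem_range] at hl
        exact Finset.prod_Icc_succ_top (by omega) _
      rw [Finset.sum_congr rfl h1, ← Finset.sum_mul, Finset.Icc_self, Finset.prod_singleton]
      ring
    by_cases hd : Δ ∣ (m + 2)
    · obtain ⟨k, hk⟩ := hd
      have hk1 : 1 ≤ k := by
        rcases Nat.eq_zero_or_pos k with rfl | h
        · rw [Nat.mul_zero] at hk; omega
        · exact h
      obtain ⟨q, rfl⟩ : ∃ q, k = q + 1 := ⟨k - 1, by omega⟩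
      have hε1 : ε (m + 1) = 1 := by
        rw [hε, if_pos (show Δ ∣ (m + 1 + 1) from ⟨q + 1, by omega⟩)]
      have hk' : m + 2 = Δ * q + Δ := by rw [hk]; ring
      have hm1 : m + 1 = (Δ - 1) + Δ * q := by omega
      have hdiv : (m + 1) / Δ = q := by
        rw [hm1, Nat.add_mul_div_left _ _ (by omega : 0 < Δ),
          Nat.div_eq_of_lt (by omega)]
        omega
      have hmod : (m + 1) % Δ = Δ - 1 := by
        rw [hm1, Nat.add_mul_mod_self_left, Nat.mod_eq_of_lt (by omega)]
      have hdiv2 : (m + 1 + 1) / Δ = q + 1 := by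
        have h2 : m + 1 + 1 = Δ * (q + 1) := by omega
        rw [h2, Nat.mul_div_cancel_left _ (by omega : 0 < Δ)]
      have hmod2 : (m + 1 + 1) % Δ = 0 := by
        have h2 : m + 1 + 1 = Δ * (q + 1) := by omega
        rw [h2, Nat.mul_mod_right]
      rw [hsplit, ih, hε1, hmod, hdiv, hmod2, hdiv2]
      rw [Nat.cast_sub hΔ]
      rw [pow_succ]
      push_cast
      ring
    · have hε0 : ε (m + 1) = 0 := by
        rw [hε, if_neg (show ¬ Δ ∣ (m + 1 + 1) from hd)]
      have hq : (m + 1 + 1) / Δ = (m + 1) / Δ := by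
        rw [Nat.succ_div, if_neg (show ¬ Δ ∣ (m + 1 + 1) from hd)]
        omega
      have hm : (m + 1 + 1) % Δ = (m + 1) % Δ + 1 := by
        have h1 := Nat.div_add_mod (m + 1) Δ
        have h2 := Nat.div_add_mod (m + 1 + 1) Δ
        rw [hq] at h2
        omega
      rw [hsplit, ih, hε0, hm, hq]
      push_cast
      ring

lemma adasmooth_aux_mod (Δ : ℕ) (hΔ : 1 ≤ Δ) : ∀ r : ℕ,
    |∑ n ∈ Finset.range r, ((n % Δ : ℕ) : ℝ) - ((Δ : ℝ) - 1) / 2 * r| ≤ (Δ : ℝ) ^ 2 := by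
  intro r
  induction r using Nat.strong_induction_on with
  | _ r ih =>
    by_cases h : r < Δ
    · have hub : ∑ n ∈ Finset.range r, ((n % Δ : ℕ) : ℝ) ≤ (r : ℝ) * Δ := by
        calc ∑ n ∈ Finset.range r, ((n % Δ : ℕ) : ℝ)
            ≤ ∑ _n ∈ Finset.range r, (Δ : ℝ) := by
              apply Finset.sum_le_sum
              intro n _
              exact_mod_cast (Nat.mod_lt n (by omega : 0 < Δ)).le
          _ = (r : ℝ) * Δ := by
              rw [Finset.sum_const, Finset.card_range, nsmul_eq_mul]
      have hlb : (0 : ℝ) ≤ ∑ n ∈ Finset.range r, ((n % Δ : ℕ) : ℝ) :=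
        Finset.sum_nonneg fun n _ => by positivity
      have hr : (r : ℝ) ≤ Δ := by exact_mod_cast h.le
      have hr0 : (0 : ℝ) ≤ r := Nat.cast_nonneg r
      have hD1 : (1 : ℝ) ≤ Δ := by exact_mod_cast hΔ
      rw [abs_le]
      constructor <;> nlinarith
    · push_neg at h
      have hsplit : ∑ n ∈ Finset.range r, ((n % Δ : ℕ) : ℝ)
          = (∑ n ∈ Finset.range Δ, ((n % Δ : ℕ) : ℝ))
            + ∑ i ∈ Finset.range (r - Δ), (((Δ + i) % Δ : ℕ) : ℝ) := by
        rw [← Finset.sum_range_add, show Δ + (r - Δ) = r from by omega]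
      have h1 : ∑ n ∈ Finset.range Δ, ((n % Δ : ℕ) : ℝ) = (Δ : ℝ) * ((Δ : ℝ) - 1) / 2 := by
        have hc : ∀ n ∈ Finset.range Δ, ((n % Δ : ℕ) : ℝ) = (n : ℝ) := by
          intro n hn
          rw [Nat.mod_eq_of_lt (Finset.mem_range.mp hn)]
        rw [Finset.sum_congr rfl hc]
        have h2 := Finset.sum_range_id_mul_two Δ
        have h3 : ((∑ i ∈ Finset.range Δ, i : ℕ) : ℝ) * 2 = (Δ : ℝ) * ((Δ : ℝ) - 1) := by
          rw [← Nat.cast_ofNat, ← Nat.cast_mul, h2, Nat.cast_mul, Nat.cast_sub hΔ]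
          norm_num
        push_cast at h3
        linarith
      have h2 : ∀ i, ((Δ + i) % Δ : ℕ) = (i % Δ : ℕ) := fun i => Nat.add_mod_left Δ i
      have ihr := ih (r - Δ) (by omega)
      have hcast : ((r - Δ : ℕ) : ℝ) = (r : ℝ) - (Δ : ℝ) := by
        rw [Nat.cast_sub h]
      rw [hcast] at ihr
      simp only [h2] at hsplit
      rw [hsplit, h1]
      have heq : (Δ : ℝ) * ((Δ : ℝ) - 1) / 2
          + (∑ i ∈ Finset.range (r - Δ), ((i % Δ : ℕ) : ℝ)) - ((Δ : ℝ) - 1) / 2 * r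
          = (∑ i ∈ Finset.range (r - Δ), ((i % Δ : ℕ) : ℝ))
            - ((Δ : ℝ) - 1) / 2 * ((r : ℝ) - Δ) := by ring
      rw [heq]
      exact ihr

lemma adasmooth_aux_geom (Δ : ℕ) (hΔ : 1 ≤ Δ) : ∀ r : ℕ,
    ∑ m ∈ Finset.range r, (2⁻¹ : ℝ) ^ ((m + 1) / Δ) ≤ 2 * Δ := by
  intro r
  induction r using Nat.strong_induction_on with
  | _ r ih =>
    by_cases h : r < Δ
    · calc ∑ m ∈ Finset.range r, (2⁻¹ : ℝ) ^ ((m + 1) / Δ)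
          ≤ ∑ _m ∈ Finset.range r, (1 : ℝ) := by
            apply Finset.sum_le_sum
            intro m _
            exact pow_le_one₀ (by norm_num) (by norm_num)
        _ = (r : ℝ) := by simp
        _ ≤ 2 * Δ := by
            have h1 : (r : ℝ) ≤ Δ := by exact_mod_cast h.le
            have hD : (0 : ℝ) ≤ Δ := Nat.cast_nonneg Δ
            linarith
    · push_neg at h
      have hsplit : ∑ m ∈ Finset.range r, (2⁻¹ : ℝ) ^ ((m + 1) / Δ)
          = (∑ m ∈ Finset.range Δ, (2⁻¹ : ℝ) ^ ((m + 1) / Δ))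
            + ∑ i ∈ Finset.range (r - Δ), (2⁻¹ : ℝ) ^ ((Δ + i + 1) / Δ) := by
        rw [← Finset.sum_range_add, show Δ + (r - Δ) = r from by omega]
      have h2 : ∀ i : ℕ, (Δ + i + 1) / Δ = (i + 1) / Δ + 1 := by
        intro i
        rw [show Δ + i + 1 = (i + 1) + Δ from by omega,
          Nat.add_div_right _ (by omega : 0 < Δ)]
      have h3 : ∑ i ∈ Finset.range (r - Δ), (2⁻¹ : ℝ) ^ ((Δ + i + 1) / Δ)
          = 2⁻¹ * ∑ i ∈ Finset.range (r - Δ), (2⁻¹ : ℝ) ^ ((i + 1) / Δ) := by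
        rw [Finset.mul_sum]
        apply Finset.sum_congr rfl
        intro i _
        rw [h2 i, pow_succ]
        ring
      have h4 : ∑ m ∈ Finset.range Δ, (2⁻¹ : ℝ) ^ ((m + 1) / Δ) ≤ (Δ : ℝ) := by
        calc ∑ m ∈ Finset.range Δ, (2⁻¹ : ℝ) ^ ((m + 1) / Δ)
            ≤ ∑ _m ∈ Finset.range Δ, (1 : ℝ) := by
              apply Finset.sum_le_sum
              intro m _
              exact pow_le_one₀ (by norm_num) (by norm_num)
          _ = (Δ : ℝ) := by simp
      have ihr := ih (r - Δ) (by omega)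
      rw [hsplit, h3]
      linarith

theorem adasmooth_prop_delta_eq (Δ : ℕ) (hΔ : 1 ≤ Δ) (ε : ℕ → ℕ)
    (hε : ∀ j, ε j = if Δ ∣ (j + 1) then 1 else 0) :
    Filter.Tendsto
      (fun r : ℕ =>
        (1 / (r : ℝ)) *
          ∑ m ∈ Finset.range r, ∑ l ∈ Finset.range (m + 1),
            ∏ j ∈ Finset.Icc l m, (1 + (ε j : ℝ))⁻¹)
      Filter.atTop (nhds ((3 * (Δ : ℝ) - 1) / 2)) := by
  set L : ℝ := (3 * (Δ : ℝ) - 1) / 2 with hL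
  set g : ℕ → ℝ := fun r =>
    (1 / (r : ℝ)) *
      ∑ m ∈ Finset.range r, ∑ l ∈ Finset.range (m + 1),
        ∏ j ∈ Finset.Icc l m, (1 + (ε j : ℝ))⁻¹ with hg
  have key : ∀ r : ℕ, 1 ≤ r → ‖g r - L‖ ≤ 4 * (Δ : ℝ) ^ 2 / r := by
    intro r hr
    have hrR : (1 : ℝ) ≤ (r : ℝ) := by exact_mod_cast hr
    have hr0 : (0 : ℝ) < (r : ℝ) := by linarith
    have hgr : g r = (1 / (r : ℝ)) *
        ∑ m ∈ Finset.range r, ∑ l ∈ Finset.range (m + 1),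
          ∏ j ∈ Finset.Icc l m, (1 + (ε j : ℝ))⁻¹ := rfl
    have hA : ∑ m ∈ Finset.range r, ∑ l ∈ Finset.range (m + 1),
          ∏ j ∈ Finset.Icc l m, (1 + (ε j : ℝ))⁻¹
        = ∑ m ∈ Finset.range r,
            ((((m + 1) % Δ : ℕ) : ℝ) + Δ - Δ * (2⁻¹ : ℝ) ^ ((m + 1) / Δ)) :=
      Finset.sum_congr rfl fun m _ => adasmooth_aux_inner Δ hΔ ε hε m
    set M : ℝ := ∑ n ∈ Finset.range (r + 1), ((n % Δ : ℕ) : ℝ) with hM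
    set G : ℝ := ∑ m ∈ Finset.range r, (2⁻¹ : ℝ) ^ ((m + 1) / Δ) with hG
    have hsum : ∑ m ∈ Finset.range r,
          ((((m + 1) % Δ : ℕ) : ℝ) + Δ - Δ * (2⁻¹ : ℝ) ^ ((m + 1) / Δ))
        = M + (r : ℝ) * Δ - Δ * G := by
      rw [hM, hG]
      rw [Finset.sum_range_succ' (fun n => ((n % Δ : ℕ) : ℝ)) r]
      simp only [Nat.zero_mod, Nat.cast_zero, add_zero]
      rw [Finset.sum_sub_distrib, Finset.sum_add_distrib, Finset.sum_const,
        Finset.card_range, nsmul_eq_mul, ← Finset.mul_sum]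
    have hMb := adasmooth_aux_mod Δ hΔ (r + 1)
    have hGub := adasmooth_aux_geom Δ hΔ r
    have hGlb : (0 : ℝ) ≤ G := Finset.sum_nonneg fun m _ => by positivity
    have hD1 : (1 : ℝ) ≤ Δ := by exact_mod_cast hΔ
    have hdiff : g r - L = (1 / (r : ℝ)) * ((M + (r : ℝ) * Δ - Δ * G) - L * r) := by
      rw [hgr, hA, hsum]
      field_simp
    have hbound : |(M + (r : ℝ) * Δ - Δ * G) - L * r| ≤ 4 * (Δ : ℝ) ^ 2 := by
      have hcast : ((r + 1 : ℕ) : ℝ) = (r : ℝ) + 1 := by push_cast; ring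
      rw [hcast] at hMb
      have hexp : (M + (r : ℝ) * Δ - Δ * G) - L * r
          = (M - ((Δ : ℝ) - 1) / 2 * ((r : ℝ) + 1)) + ((Δ : ℝ) - 1) / 2 - Δ * G := by
        rw [hL]; ring
      rw [hexp, abs_le]
      rw [← hM] at hMb
      rw [abs_le] at hMb
      rw [← hG] at hGub
      constructor <;> nlinarith
    rw [hdiff, Real.norm_eq_abs, abs_mul, abs_of_pos (by positivity : (0:ℝ) < 1 / (r:ℝ))]
    rw [one_div, mul_comm, div_eq_mul_inv]
    exact mul_le_mul_of_nonneg_right hbound (by positivity)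
  have hz : Filter.Tendsto (fun r : ℕ => g r - L) Filter.atTop (nhds 0) := by
    apply squeeze_zero_norm' (a := fun r : ℕ => 4 * (Δ : ℝ) ^ 2 / r)
    · filter_upwards [Filter.eventually_ge_atTop 1] with r hr
      exact key r hr
    · exact tendsto_const_div_atTop_nhds_zero_nat _
  have hfin := hz.add_const L
  simpa using hfin
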